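/- Let A : X → Y be bounded linear with BFD (U, V, κ), κ_λ > 0, weights d with inf d_λ > 0, α > 0. Then the BFD soft-thresholding estimator B_α : Y → X, B_α(y) = Ū ∘ M_κ⁺ ∘ S_{αd} ∘ V*(y), is well defined and continuous on Y. -/

import Mathlib

open RealInnerProductSpace

noncomputable def soft (η d : ℝ) : ℝ := Real.sign η * max 0 (|η| - d)

lemma soft_eq (η d : ℝ) (hd : 0 ≤ d) : soft η d = max 0 (η - d) + min 0 (η + d) := by
  unfold soft
  rcases lt_trichotomy η 0 with h | h | h
  · rw [Real.sign_of_neg h, abs_of_neg h]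
    rcases le_total (-η - d) 0 with h2 | h2 <;>
      rcases le_total (η - d) 0 with h3 | h3 <;>
      rcases le_total (η + d) 0 with h4 | h4 <;>
      simp [max_eq_left, max_eq_right, min_eq_left, min_eq_right, *] <;> linarith
  · subst h
    simp only [Real.sign_zero, zero_mul, zero_sub, zero_add]
    rw [max_eq_left (by linarith), min_eq_left hd]
    ring
  · rw [Real.sign_of_pos h, abs_of_pos h]
    rcases le_total (η - d) 0 with h3 | h3 <;>
      rcases le_total (η + d) 0 with h4 | h4 <;>
      simp [max_eq_left, max_eq_right, min_eq_left, min_eq_right, *] <;> linarith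

lemma soft_eq_zero {η d : ℝ} (h : |η| ≤ d) : soft η d = 0 := by
  unfold soft
  rw [max_eq_left (by linarith), mul_zero]

lemma soft_continuous (d : ℝ) (hd : 0 ≤ d) : Continuous (fun η => soft η d) := by
  have : (fun η => soft η d) = fun η => max 0 (η - d) + min 0 (η + d) := by
    ext η; exact soft_eq η d hd
  rw [this]; fun_prop

theorem bfd_soft_thresholding_wellDefined_continuous
    {X Y : Type*} [NormedAddCommGroup X] [InnerProductSpace ℝ X] [CompleteSpace X]
    [NormedAddCommGroup Y] [InnerProductSpace ℝ Y] [CompleteSpace Y]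
    {Λ : Type*} [Countable Λ]
    (A : X →L[ℝ] Y) (u ubar : Λ → X) (v : Λ → Y) (κ : Λ → ℝ)
    (a b : ℝ) (ha : 0 < a) (hab : a ≤ b)
    -- (u_λ) is a frame of X with dual frame (ubar_λ)
    (hu : ∀ x : X, ∃ s : ℝ, HasSum (fun i => ⟪x, u i⟫ ^ 2) s ∧
      a * ‖x‖ ^ 2 ≤ s ∧ s ≤ b * ‖x‖ ^ 2)
    (hdual : ∀ x : X, HasSum (fun i => ⟪x, u i⟫ • ubar i) x)
    -- (v_λ) is a frame of the closure of ran(A)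
    (a' b' : ℝ) (ha' : 0 < a') (hab' : a' ≤ b')
    (hvmem : ∀ i, v i ∈ closure (Set.range A))
    (hv : ∀ y ∈ closure (Set.range A), ∃ s : ℝ, HasSum (fun i => ⟪y, v i⟫ ^ 2) s ∧
      a' * ‖y‖ ^ 2 ≤ s ∧ s ≤ b' * ‖y‖ ^ 2)
    (hκ : ∀ i, 0 < κ i)
    (hadj : ∀ i, ContinuousLinearMap.adjoint A (v i) = κ i • u i)
    (d : Λ → ℝ) (c : ℝ) (hc : 0 < c) (hd : ∀ i, c ≤ d i)
    (α : ℝ) (hα : 0 < α) :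
    ∃ B : Y → X,
      (∀ y : Y, HasSum (fun i => (soft ⟪y, v i⟫ (α * d i) / κ i) • ubar i) (B y)) ∧
      Continuous B := by
  classical
  set g : Y → Λ → X := fun y i => (soft ⟪y, v i⟫ (α * d i) / κ i) • ubar i with hg
  -- norm bound on v i
  have hb' : (0:ℝ) < b' := lt_of_lt_of_le ha' hab'
  have hvnorm : ∀ i, ‖v i‖ ≤ Real.sqrt b' := by
    intro i
    obtain ⟨s, hs, _, hsb⟩ := hv (v i) (hvmem i)
    have h1 : ⟪v i, v i⟫ ^ 2 ≤ s := le_hasSum hs i (fun j _ => sq_nonneg _)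
    rw [real_inner_self_eq_norm_sq] at h1
    have h2 : ‖v i‖ ^ 2 ≤ b' := by
      nlinarith [sq_nonneg (‖v i‖), norm_nonneg (v i)]
    nlinarith [Real.sq_sqrt hb'.le, Real.sqrt_nonneg b', norm_nonneg (v i)]
  -- summability of frame coefficients for all y
  set K : Submodule ℝ Y := (LinearMap.range (A : X →ₗ[ℝ] Y)).topologicalClosure with hK
  have hKclosed : IsClosed (K : Set Y) := Submodule.isClosed_topologicalClosure _
  haveI : CompleteSpace K := hKclosed.completeSpace_coe
  have hKset : (K : Set Y) = closure (Set.range A) := by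
    rw [hK, Submodule.topologicalClosure_coe]
    norm_cast
  have hsummable : ∀ y : Y, Summable (fun i => ⟪y, v i⟫ ^ 2) := by
    intro y
    have hPy : ((K.orthogonalProjectionOnto y : K) : Y) ∈ closure (Set.range A) := by
      rw [← hKset]; exact Subtype.coe_prop _
    obtain ⟨s, hs, _, _⟩ := hv _ hPy
    have heq : ∀ i, ⟪y, v i⟫ = ⟪((K.orthogonalProjectionOnto y : K) : Y), v i⟫ := by
      intro i
      have hvK : v i ∈ K := by rw [← hKset] at hvmem; exact hvmem i
      have := Submodule.sub_starProjection_mem_orthogonal (K := K) y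
      have h0 := (Submodule.mem_orthogonal _ _).1 this (v i) hvK
      have : ⟪y - ((K.orthogonalProjectionOnto y : K) : Y), v i⟫ = 0 := by
        rw [real_inner_comm]; exact h0
      rw [inner_sub_left] at this
      linarith
    refine ⟨s, ?_⟩
    convert hs using 2 with i
    rw [heq i]
  -- finite support sets
  have hfin : ∀ (y : Y) (t : ℝ), 0 < t → {i | t < |⟪y, v i⟫|}.Finite := by
    intro y t ht
    have h := (hsummable y).tendsto_cofinite_zero
    have h2 : ∀ᶠ i in Filter.cofinite, ⟪y, v i⟫ ^ 2 < t ^ 2 :=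
      h.eventually_lt_const (by positivity)
    rw [Filter.eventually_cofinite] at h2
    refine h2.subset ?_
    intro i hi
    simp only [Set.mem_setOf_eq, not_lt]
    calc t ^ 2 ≤ |⟪y, v i⟫| ^ 2 := by
          apply pow_le_pow_left₀ ht.le hi.le
      _ = ⟪y, v i⟫ ^ 2 := sq_abs _
  -- support vanishing
  have hzero : ∀ (y : Y) (i : Λ), |⟪y, v i⟫| ≤ α * c → g y i = 0 := by
    intro y i hle
    have : |⟪y, v i⟫| ≤ α * d i := le_trans hle (by nlinarith [hd i])
    simp [hg, soft_eq_zero this]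
  have hsupp : ∀ y : Y, (Function.support (g y)).Finite := by
    intro y
    refine (hfin y (α * c) (by positivity)).subset ?_
    intro i hi
    simp only [Set.mem_setOf_eq]
    by_contra h
    exact hi (hzero y i (not_lt.1 h))
  refine ⟨fun y => ∑ᶠ i, g y i, ?_, ?_⟩
  · intro y
    show HasSum (g y) (∑ᶠ i, g y i)
    rw [finsum_eq_sum (g y) (hsupp y)]
    refine hasSum_sum_of_ne_finset_zero (fun i hi => ?_)
    by_contra hne
    exact hi ((hsupp y).mem_toFinset.2 hne)
  · rw [continuous_iff_continuousAt]
    intro y₀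
    set F := ((hfin y₀ (α * c / 2) (by positivity)).toFinset) with hF
    set r : ℝ := α * c / (2 * (Real.sqrt b' + 1)) with hr
    have hsb : (0:ℝ) < Real.sqrt b' + 1 := by positivity
    have hrpos : 0 < r := by positivity
    have hloc : ∀ y ∈ Metric.ball y₀ r, (fun y => ∑ᶠ i, g y i) y = ∑ i ∈ F, g y i := by
      intro y hy
      apply finsum_eq_finset_sum_of_support_subset
      intro i hi
      simp only [hF, Set.Finite.coe_toFinset, Set.mem_setOf_eq]
      by_contra hcon
      push_neg at hcon
      apply hi
      apply hzero
      have h1 : |⟪y, v i⟫ - ⟪y₀, v i⟫| ≤ Real.sqrt b' * r := by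
        rw [← inner_sub_left]
        calc |⟪y - y₀, v i⟫| ≤ ‖y - y₀‖ * ‖v i‖ := abs_real_inner_le_norm _ _
          _ ≤ r * Real.sqrt b' := by
              apply mul_le_mul (le_of_lt (by simpa [dist_eq_norm] using hy))
                (hvnorm i) (norm_nonneg _) hrpos.le
          _ = Real.sqrt b' * r := mul_comm _ _
      have h2 : Real.sqrt b' * r ≤ α * c / 2 := by
        have h3 : (Real.sqrt b' + 1) * r = α * c / 2 := by
          rw [hr]; field_simp
        nlinarith [hrpos, Real.sqrt_nonneg b']
      calc |⟪y, v i⟫| ≤ |⟪y₀, v i⟫| + |⟪y, v i⟫ - ⟪y₀, v i⟫| := by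
            have := abs_sub_abs_le_abs_sub ⟪y, v i⟫ ⟪y₀, v i⟫
            linarith
        _ ≤ α * c / 2 + α * c / 2 := add_le_add hcon (h1.trans h2)
        _ = α * c := by ring
    apply ContinuousAt.congr
    · show ContinuousAt (fun y => ∑ i ∈ F, g y i) y₀
      refine (continuous_finset_sum F (fun i _ => ?_)).continuousAt
      have hcont : Continuous fun y : Y => soft ⟪y, v i⟫ (α * d i) / κ i :=
        ((soft_continuous (α * d i) (mul_nonneg hα.le (hc.le.trans (hd i)))).comp
          (continuous_id.inner continuous_const)).div_const (κ i)
      exact hcont.smul continuous_const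
    · exact Filter.eventuallyEq_of_mem (Metric.ball_mem_nhds y₀ hrpos) (fun y hy => (hloc y hy).symm)
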